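/- Let $R$ be a discrete valuation ring with uniformizer $\pi$ and residue field $k$. Let $A$ be a Noetherian local $R$-algebra in which $\pi$ is not a unit, and let $f$ be an $R$-algebra automorphism of $A$ of finite order $n$, where $n$ is invertible in $k$. If $f$ induces the identity on $A/\pi A$, then $f$ is the identity on $A$. -/

import Mathlib

/-- Let `R` be a discrete valuation ring with uniformizer `π` and residue
field `k`. Let `A` be a Noetherian local `R`-algebra in which `π` is not a unit (i.e. lies in
the maximal ideal of `A`), and let `f` be an `R`-algebra automorphism of `A` of finite order
`n`, where `n` is invertible in `k`. If `f` induces the identity on `A ⧸ πA`, then `f` is the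
identity on `A`. -/
theorem stmt0 {R A : Type*} [CommRing R] [IsDomain R] [IsDiscreteValuationRing R]
    [CommRing A] [IsNoetherianRing A] [IsLocalRing A] [Algebra R A]
    (π : R) (hπ : Irreducible π)
    (hπA : algebraMap R A π ∈ IsLocalRing.maximalIdeal A)
    (f : A ≃ₐ[R] A) (n : ℕ) (hn : 0 < n) (hfn : f ^ n = 1)
    (hk : (n : IsLocalRing.ResidueField R) ≠ 0)
    (hf : ∀ a : A, f a - a ∈ Ideal.span {algebraMap R A π}) :
    f = 1 := by
  set p : A := algebraMap R A π with hp
  -- `n` is a unit in `R`, hence in `A`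
  have hnR : IsUnit (n : R) := by
    by_contra h
    apply hk
    have hmem : (n : R) ∈ IsLocalRing.maximalIdeal R := h
    have : IsLocalRing.residue R (n : R) = 0 := Ideal.Quotient.eq_zero_iff_mem.mpr hmem
    simpa [map_natCast] using this
  have hnA : IsUnit (n : A) := by
    have := hnR.map (algebraMap R A)
    simpa [map_natCast] using this
  -- divisibility form of the hypothesis
  have hf' : ∀ a : A, p ∣ f a - a := fun a =>
    (Ideal.mem_span_singleton).mp (hf a)
  -- `f` powers: `p ∣ (f^j) a - a`
  have hpow : ∀ j : ℕ, ∀ a : A, p ∣ (f ^ j) a - a := by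
    intro j
    induction j with
    | zero => intro a; simp
    | succ j ih =>
      intro a
      have h1 : (f ^ (j + 1)) a = (f ^ j) (f a) := by
        rw [pow_succ]; rfl
      rw [h1]
      have : (f ^ j) (f a) - a = ((f ^ j) (f a) - f a) + (f a - a) := by ring
      rw [this]
      exact dvd_add (ih (f a)) (hf' a)
  -- `f^j` commutes with multiplication by `p`
  have hcomm : ∀ j k : ℕ, ∀ b : A, (f ^ j) (p ^ k * b) = p ^ k * (f ^ j) b := by
    intro j k b
    rw [map_mul, map_pow]
    congr 2
    exact AlgEquiv.commutes (f ^ j) π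
  -- telescoping sum
  have htel : ∀ N : ℕ, ∀ a : A, (f ^ N) a - a = ∑ j ∈ Finset.range N, (f ^ j) (f a - a) := by
    intro N
    induction N with
    | zero => intro a; simp
    | succ N ih =>
      intro a
      rw [Finset.sum_range_succ, ← ih a]
      have h1 : (f ^ (N + 1)) a = (f ^ N) (f a) := by rw [pow_succ]; rfl
      rw [h1, map_sub]
      ring
  -- main induction: `p^(m+1) ∣ f a - a` for all `m`
  have hmain : ∀ m : ℕ, ∀ a : A, p ^ (m + 1) ∣ f a - a := by
    intro m
    induction m with
    | zero => intro a; simpa using hf' a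
    | succ m ih =>
      intro a
      obtain ⟨b, hb⟩ := ih a
      -- sum over range n is zero
      have hzero : (0 : A) = ∑ j ∈ Finset.range n, (f ^ j) (f a - a) := by
        have := htel n a
        rw [hfn] at this
        simpa using this
      -- each term is `p^(m+1) * b` plus something divisible by `p^(m+2)`
      have hterm : ∀ j ∈ Finset.range n,
          p ^ (m + 2) ∣ (f ^ j) (f a - a) - (f a - a) := by
        intro j _
        rw [hb, hcomm j (m + 1)]
        have : p ^ (m + 1) * (f ^ j) b - p ^ (m + 1) * b
            = p ^ (m + 1) * ((f ^ j) b - b) := by ring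
        rw [this, pow_succ]
        exact mul_dvd_mul_left _ (hpow j b)
      have hsum : p ^ (m + 2) ∣ ∑ j ∈ Finset.range n, ((f ^ j) (f a - a) - (f a - a)) :=
        Finset.dvd_sum hterm
      have hsplit : ∑ j ∈ Finset.range n, ((f ^ j) (f a - a) - (f a - a))
          = (∑ j ∈ Finset.range n, (f ^ j) (f a - a)) - n * (f a - a) := by
        rw [Finset.sum_sub_distrib, Finset.sum_const, Finset.card_range, nsmul_eq_mul]
      rw [hsplit, ← hzero, zero_sub, dvd_neg] at hsum
      -- cancel the unit `n`
      obtain ⟨u, hu⟩ := hnA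
      have : p ^ (m + 2) ∣ (↑u⁻¹ : A) * ((n : A) * (f a - a)) := Dvd.dvd.mul_left hsum _
      rwa [← mul_assoc, ← hu, Units.inv_mul, one_mul] at this
  -- conclude via Krull intersection
  ext a
  have hmem : ∀ m : ℕ, f a - a ∈ Ideal.span {p} ^ m := by
    intro m
    rw [Ideal.span_singleton_pow, Ideal.mem_span_singleton]
    exact dvd_trans (pow_dvd_pow p (Nat.le_succ m)) (hmain m a)
  have hne : Ideal.span {p} ≠ ⊤ := by
    intro h
    exact (IsLocalRing.maximalIdeal.isMaximal A).ne_top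
      (top_le_iff.mp (h ▸ (Ideal.span_singleton_le_iff_mem _).mpr hπA))
  have hbot := Ideal.iInf_pow_eq_bot_of_isLocalRing (Ideal.span {p}) hne
  have : f a - a ∈ (⊥ : Ideal A) := by
    rw [← hbot, Ideal.mem_iInf]
    exact hmem
  have := sub_eq_zero.mp (Ideal.mem_bot.mp this)
  simpa using this
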